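/- Let p = (p₁,…,p_w) be a probability vector and define the averaged weight of a codeword (v₁u, …, v_w u) (with v_r = 1+z+⋯+z^{r-1} and u ∈ F₂[z] nonzero) as Σᵢ pᵢ·wt(vᵢ·u). If gcd of {v_i : p_i > 0} is 1, then the minimum averaged weight over nonzero finite-weight inputs u equals min(Σᵢ i·pᵢ, 2) = min(E[W], 2), where W takes value i with probability pᵢ. -/

import Mathlib

open Polynomial Finset

/-- v_r(z) = 1 + z + ⋯ + z^{r-1} over F₂. -/
noncomputable def vpoly (r : ℕ) : Polynomial (ZMod 2) :=
  ∑ i ∈ Finset.range r, Polynomial.X ^ i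

lemma vpoly_coeff (r k : ℕ) : (vpoly r).coeff k = if k < r then 1 else 0 := by
  simp [vpoly, coeff_X_pow, Finset.sum_ite_eq, Finset.mem_range]

lemma vpoly_support (r : ℕ) : (vpoly r).support = Finset.range r := by
  ext k
  by_cases h : k < r <;> simp [mem_support_iff, vpoly_coeff, h]

lemma vpoly_ne_zero {r : ℕ} (hr : 1 ≤ r) : vpoly r ≠ 0 := by
  intro h
  have := vpoly_support r
  rw [h, Polynomial.support_zero] at this
  have : (0 : ℕ) ∈ (∅ : Finset ℕ) := by rw [this]; exact Finset.mem_range.mpr hr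
  simp at this

lemma support_mul_X_pow (q : Polynomial (ZMod 2)) (k : ℕ) :
    (q * X ^ k).support = q.support.image (· + k) := by
  ext m
  simp only [mem_support_iff, Finset.mem_image, coeff_mul_X_pow']
  constructor
  · intro h
    by_cases hk : k ≤ m
    · refine ⟨m - k, by simpa [hk] using h, by omega⟩
    · simp [hk] at h
  · rintro ⟨a, ha, rfl⟩
    simpa using ha

lemma card_support_mul_X_pow (q : Polynomial (ZMod 2)) (k : ℕ) :
    (q * X ^ k).support.card = q.support.card := by
  rw [support_mul_X_pow, Finset.card_image_of_injective _ (add_left_injective k)]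

lemma zmod2_unit {x : ZMod 2} (hx : x ≠ 0) : x = 1 := by
  revert hx; revert x; decide

lemma eq_X_pow_of_card_support_eq_one {u : Polynomial (ZMod 2)}
    (h : u.support.card = 1) : ∃ k, u = X ^ k := by
  obtain ⟨k, x, hx, rfl⟩ := Polynomial.card_support_eq_one.mp h
  exact ⟨k, by rw [zmod2_unit hx, map_one, one_mul]⟩

lemma dvd_X_pow_eq {u : Polynomial (ZMod 2)} {k : ℕ} (h : u ∣ X ^ k) :
    ∃ j, u = X ^ j := by
  obtain ⟨i, hi, hassoc⟩ := (dvd_prime_pow Polynomial.prime_X k).mp h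
  obtain ⟨c, hc⟩ := hassoc.symm
  obtain ⟨r, hr, hrc⟩ := Polynomial.isUnit_iff.mp c.isUnit
  have : r = 1 := zmod2_unit (by rintro rfl; simp at hr)
  subst this
  refine ⟨i, ?_⟩
  rw [← hc, ← hrc, map_one, mul_one]

lemma two_le_card (u : Polynomial (ZMod 2)) (hu : u ≠ 0) (hcard : u.support.card ≠ 1)
    {i : ℕ} (hi : 1 ≤ i) : 2 ≤ ((vpoly i * u).support.card : ℝ) := by
  have hne : vpoly i * u ≠ 0 := mul_ne_zero (vpoly_ne_zero hi) hu
  have h1 : 1 ≤ (vpoly i * u).support.card :=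
    Finset.card_pos.mpr (Polynomial.nonempty_support_iff.mpr hne)
  have : (vpoly i * u).support.card ≠ 1 := by
    intro h
    obtain ⟨k, hk⟩ := eq_X_pow_of_card_support_eq_one h
    have : u ∣ X ^ k := ⟨vpoly i, by rw [← hk]; ring⟩
    obtain ⟨j, rfl⟩ := dvd_X_pow_eq this
    have : (X ^ j : Polynomial (ZMod 2)).support.card = 1 := by
      rw [Polynomial.support_X_pow j, Finset.card_singleton]
    exact hcard this
  exact_mod_cast by omega

lemma wt_binom {i : ℕ} (hi : 1 ≤ i) :
    ((vpoly i * (X - 1)).support.card : ℝ) = 2 := by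
  have h : vpoly i * (X - 1) = X ^ i - 1 := by
    have := geom_sum_mul (X : Polynomial (ZMod 2)) i
    simpa [vpoly] using this
  have h2 : (X ^ i - 1 : Polynomial (ZMod 2)) = C 1 * X ^ i + C 1 * X ^ 0 := by
    rw [map_one, one_mul, pow_zero, one_mul, sub_eq_add_neg, CharTwo.neg_eq]
  rw [h, h2, Polynomial.support_binomial (by omega) one_ne_zero one_ne_zero]
  rw [Finset.card_insert_of_notMem (by simp; omega), Finset.card_singleton]
  norm_num

/-- Averaged free distance: if the gcd of the generators v_i on the support of the
probability vector p is 1, then the minimum over nonzero inputs u of the averaged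
weight Σᵢ pᵢ·wt(vᵢ·u) equals min(E[W], 2) where E[W] = Σᵢ i·pᵢ. -/
theorem averaged_free_distance (w : ℕ) (hw : 1 ≤ w) (p : ℕ → ℝ)
    (hp0 : ∀ i, 0 ≤ p i) (hp1 : ∑ i ∈ Finset.Icc 1 w, p i = 1)
    (hgcd : ∀ d : Polynomial (ZMod 2),
      (∀ i ∈ Finset.Icc 1 w, 0 < p i → d ∣ vpoly i) → IsUnit d) :
    IsLeast
      {x : ℝ | ∃ u : Polynomial (ZMod 2), u ≠ 0 ∧
        x = ∑ i ∈ Finset.Icc 1 w, p i * (((vpoly i) * u).support.card : ℝ)}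
      (min (∑ i ∈ Finset.Icc 1 w, (i : ℝ) * p i) 2) := by
  have hwt1 : ∀ i, ((vpoly i * 1).support.card : ℝ) = i := by
    intro i
    rw [mul_one, vpoly_support, Finset.card_range]
  constructor
  · rcases le_total (∑ i ∈ Finset.Icc 1 w, (i : ℝ) * p i) 2 with h | h
    · rw [min_eq_left h]
      refine ⟨1, one_ne_zero, ?_⟩
      apply Finset.sum_congr rfl
      intro i _
      rw [hwt1, mul_comm]
    · rw [min_eq_right h]
      refine ⟨X - 1, ?_, ?_⟩
      · have : (X - 1 : Polynomial (ZMod 2)) = X - C 1 := by rw [map_one]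
        rw [this]
        exact X_sub_C_ne_zero 1
      · rw [show (2 : ℝ) = ∑ i ∈ Finset.Icc 1 w, p i * 2 by
          rw [← Finset.sum_mul, hp1, one_mul]]
        apply Finset.sum_congr rfl
        intro i hi
        rw [wt_binom (Finset.mem_Icc.mp hi).1]
  · rintro x ⟨u, hu, rfl⟩
    by_cases hcard : u.support.card = 1
    · obtain ⟨k, rfl⟩ := eq_X_pow_of_card_support_eq_one hcard
      refine le_trans (min_le_left _ _) (le_of_eq ?_)
      apply Finset.sum_congr rfl
      intro i _
      rw [card_support_mul_X_pow, vpoly_support, Finset.card_range, mul_comm]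
    · refine le_trans (min_le_right _ _) ?_
      calc (2 : ℝ) = ∑ i ∈ Finset.Icc 1 w, p i * 2 := by
            rw [← Finset.sum_mul, hp1, one_mul]
        _ ≤ _ := by
            apply Finset.sum_le_sum
            intro i hi
            exact mul_le_mul_of_nonneg_left
              (two_le_card u hu hcard (Finset.mem_Icc.mp hi).1) (hp0 i)
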